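/- For all X, Y, Z ∈ ℝ⁸ one has |P(X,Y,Z)| ≤ |X|·|Y|·|Z|. Moreover, if |X|² + |Y|² + |Z|² = 1 then |X|·|Y|·|Z| ≤ 1/(3√3); in particular |P(a)| ≤ 1/(3√3) for every a in the unit sphere S²³ ⊂ ℝ²⁴. -/

import Mathlib

open Matrix

open Polynomial in
/-- The cubic form `P(X,Y,Z) = Re((oX·oY)·oZ)` on `ℝ⁸ × ℝ⁸ × ℝ⁸`. -/
noncomputable def P3 (X Y Z : EuclideanSpace ℝ (Fin 8)) : ℝ :=
  X 0 * (Y 0 * Z 0 - Y 1 * Z 1 - Y 2 * Z 2 - Y 3 * Z 3 - Y 4 * Z 4 - Y 5 * Z 5 - Y 6 * Z 6 - Y 7 * Z 7) +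
  X 1 * (-(Y 0 * Z 1) - Y 1 * Z 0 - Y 2 * Z 4 - Y 3 * Z 7 + Y 4 * Z 2 - Y 5 * Z 6 + Y 6 * Z 5 + Y 7 * Z 3) +
  X 2 * (-(Y 0 * Z 2) + Y 1 * Z 4 - Y 2 * Z 0 - Y 3 * Z 5 - Y 4 * Z 1 + Y 5 * Z 3 - Y 6 * Z 7 + Y 7 * Z 6) +
  X 3 * (-(Y 0 * Z 3) + Y 1 * Z 7 + Y 2 * Z 5 - Y 3 * Z 0 - Y 4 * Z 6 - Y 5 * Z 2 + Y 6 * Z 4 - Y 7 * Z 1) +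
  X 4 * (-(Y 0 * Z 4) - Y 1 * Z 2 + Y 2 * Z 1 + Y 3 * Z 6 - Y 4 * Z 0 - Y 5 * Z 7 - Y 6 * Z 3 + Y 7 * Z 5) +
  X 5 * (-(Y 0 * Z 5) + Y 1 * Z 6 - Y 2 * Z 3 + Y 3 * Z 2 + Y 4 * Z 7 - Y 5 * Z 0 - Y 6 * Z 1 - Y 7 * Z 4) +
  X 6 * (-(Y 0 * Z 6) - Y 1 * Z 5 + Y 2 * Z 7 - Y 3 * Z 4 + Y 4 * Z 3 + Y 5 * Z 1 - Y 6 * Z 0 - Y 7 * Z 2) +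
  X 7 * (-(Y 0 * Z 7) - Y 1 * Z 3 - Y 2 * Z 6 + Y 3 * Z 1 - Y 4 * Z 5 + Y 5 * Z 4 + Y 6 * Z 2 - Y 7 * Z 0)

/-- The `X`-part of a vector in `ℝ²⁴ = ℝ⁸ × ℝ⁸ × ℝ⁸`. -/
noncomputable def Xpart (v : EuclideanSpace ℝ (Fin 24)) : EuclideanSpace ℝ (Fin 8) :=
  WithLp.toLp 2 (fun i : Fin 8 => v ⟨i.1, by omega⟩)

/-- The `Y`-part of a vector in `ℝ²⁴ = ℝ⁸ × ℝ⁸ × ℝ⁸`. -/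
noncomputable def Ypart (v : EuclideanSpace ℝ (Fin 24)) : EuclideanSpace ℝ (Fin 8) :=
  WithLp.toLp 2 (fun i : Fin 8 => v ⟨i.1 + 8, by omega⟩)

/-- The `Z`-part of a vector in `ℝ²⁴ = ℝ⁸ × ℝ⁸ × ℝ⁸`. -/
noncomputable def Zpart (v : EuclideanSpace ℝ (Fin 24)) : EuclideanSpace ℝ (Fin 8) :=
  WithLp.toLp 2 (fun i : Fin 8 => v ⟨i.1 + 16, by omega⟩)

/-- The octonionic triality cubic form on `ℝ²⁴`. -/
noncomputable def P24 (v : EuclideanSpace ℝ (Fin 24)) : ℝ :=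
  P3 (Xpart v) (Ypart v) (Zpart v)

/-- `m(a) = |x|·|y|·|z|` for `a = (x,y,z) ∈ ℝ²⁴`. -/
noncomputable def mval (v : EuclideanSpace ℝ (Fin 24)) : ℝ :=
  ‖Xpart v‖ * ‖Ypart v‖ * ‖Zpart v‖

/-- The Hessian matrix of `f : ℝⁿ → ℝ` at `x`. -/
noncomputable def hessianMatrix {n : ℕ} (f : EuclideanSpace ℝ (Fin n) → ℝ)
    (x : EuclideanSpace ℝ (Fin n)) : Matrix (Fin n) (Fin n) ℝ :=
  Matrix.of fun i j =>
    iteratedFDeriv ℝ 2 f x ![EuclideanSpace.single i 1, EuclideanSpace.single j 1]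

/-- `lam` lists the eigenvalues of `A` in decreasing order with multiplicity. -/
def IsEigDecreasing {n : ℕ} (A : Matrix (Fin n) (Fin n) ℝ) (lam : Fin n → ℝ) : Prop :=
  Antitone lam ∧ A.charpoly = ∏ i, (Polynomial.X - Polynomial.C (lam i))

/-- The operator norm of a matrix, acting on Euclidean space. -/
noncomputable def opNorm {n : ℕ} (A : Matrix (Fin n) (Fin n) ℝ) : ℝ :=
  ‖Matrix.toEuclideanCLM (𝕜 := ℝ) A‖

/-- `F` is uniformly elliptic with constant `C`. -/
def UniformlyElliptic {n : ℕ} (C : ℝ) (F : Matrix (Fin n) (Fin n) ℝ → ℝ) : Prop :=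
  ∀ M N : Matrix (Fin n) (Fin n) ℝ, M.IsSymm → N.PosSemidef →
    C⁻¹ * opNorm N ≤ F (M + N) - F M ∧ F (M + N) - F M ≤ C * opNorm N

/-- `u` is a viscosity solution of `G(D²u) = 0` in `Ω`. -/
def IsViscositySolution {n : ℕ} (Ω : Set (EuclideanSpace ℝ (Fin n)))
    (G : Matrix (Fin n) (Fin n) ℝ → ℝ) (u : EuclideanSpace ℝ (Fin n) → ℝ) : Prop :=
  ∀ x₀ ∈ Ω, ∀ φ : EuclideanSpace ℝ (Fin n) → ℝ, ContDiff ℝ 2 φ →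
    (IsLocalMax (fun x => u x - φ x) x₀ → 0 ≤ G (hessianMatrix φ x₀)) ∧
    (IsLocalMin (fun x => u x - φ x) x₀ → G (hessianMatrix φ x₀) ≤ 0)


noncomputable def octW (Y Z : EuclideanSpace ℝ (Fin 8)) : EuclideanSpace ℝ (Fin 8) :=
  (WithLp.equiv 2 (Fin 8 → ℝ)).symm
    ![Y 0 * Z 0 - Y 1 * Z 1 - Y 2 * Z 2 - Y 3 * Z 3 - Y 4 * Z 4 - Y 5 * Z 5 - Y 6 * Z 6 - Y 7 * Z 7,
      -(Y 0 * Z 1) - Y 1 * Z 0 - Y 2 * Z 4 - Y 3 * Z 7 + Y 4 * Z 2 - Y 5 * Z 6 + Y 6 * Z 5 + Y 7 * Z 3,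
      -(Y 0 * Z 2) + Y 1 * Z 4 - Y 2 * Z 0 - Y 3 * Z 5 - Y 4 * Z 1 + Y 5 * Z 3 - Y 6 * Z 7 + Y 7 * Z 6,
      -(Y 0 * Z 3) + Y 1 * Z 7 + Y 2 * Z 5 - Y 3 * Z 0 - Y 4 * Z 6 - Y 5 * Z 2 + Y 6 * Z 4 - Y 7 * Z 1,
      -(Y 0 * Z 4) - Y 1 * Z 2 + Y 2 * Z 1 + Y 3 * Z 6 - Y 4 * Z 0 - Y 5 * Z 7 - Y 6 * Z 3 + Y 7 * Z 5,
      -(Y 0 * Z 5) + Y 1 * Z 6 - Y 2 * Z 3 + Y 3 * Z 2 + Y 4 * Z 7 - Y 5 * Z 0 - Y 6 * Z 1 - Y 7 * Z 4,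
      -(Y 0 * Z 6) - Y 1 * Z 5 + Y 2 * Z 7 - Y 3 * Z 4 + Y 4 * Z 3 + Y 5 * Z 1 - Y 6 * Z 0 - Y 7 * Z 2,
      -(Y 0 * Z 7) - Y 1 * Z 3 - Y 2 * Z 6 + Y 3 * Z 1 - Y 4 * Z 5 + Y 5 * Z 4 + Y 6 * Z 2 - Y 7 * Z 0]

lemma octW_0 (Y Z : EuclideanSpace ℝ (Fin 8)) : octW Y Z 0 =
  Y 0 * Z 0 - Y 1 * Z 1 - Y 2 * Z 2 - Y 3 * Z 3 - Y 4 * Z 4 - Y 5 * Z 5 - Y 6 * Z 6 - Y 7 * Z 7 := rfl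
lemma octW_1 (Y Z : EuclideanSpace ℝ (Fin 8)) : octW Y Z 1 =
  -(Y 0 * Z 1) - Y 1 * Z 0 - Y 2 * Z 4 - Y 3 * Z 7 + Y 4 * Z 2 - Y 5 * Z 6 + Y 6 * Z 5 + Y 7 * Z 3 := rfl
lemma octW_2 (Y Z : EuclideanSpace ℝ (Fin 8)) : octW Y Z 2 =
  -(Y 0 * Z 2) + Y 1 * Z 4 - Y 2 * Z 0 - Y 3 * Z 5 - Y 4 * Z 1 + Y 5 * Z 3 - Y 6 * Z 7 + Y 7 * Z 6 := rfl
lemma octW_3 (Y Z : EuclideanSpace ℝ (Fin 8)) : octW Y Z 3 =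
  -(Y 0 * Z 3) + Y 1 * Z 7 + Y 2 * Z 5 - Y 3 * Z 0 - Y 4 * Z 6 - Y 5 * Z 2 + Y 6 * Z 4 - Y 7 * Z 1 := rfl
lemma octW_4 (Y Z : EuclideanSpace ℝ (Fin 8)) : octW Y Z 4 =
  -(Y 0 * Z 4) - Y 1 * Z 2 + Y 2 * Z 1 + Y 3 * Z 6 - Y 4 * Z 0 - Y 5 * Z 7 - Y 6 * Z 3 + Y 7 * Z 5 := rfl
lemma octW_5 (Y Z : EuclideanSpace ℝ (Fin 8)) : octW Y Z 5 =
  -(Y 0 * Z 5) + Y 1 * Z 6 - Y 2 * Z 3 + Y 3 * Z 2 + Y 4 * Z 7 - Y 5 * Z 0 - Y 6 * Z 1 - Y 7 * Z 4 := rfl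
lemma octW_6 (Y Z : EuclideanSpace ℝ (Fin 8)) : octW Y Z 6 =
  -(Y 0 * Z 6) - Y 1 * Z 5 + Y 2 * Z 7 - Y 3 * Z 4 + Y 4 * Z 3 + Y 5 * Z 1 - Y 6 * Z 0 - Y 7 * Z 2 := rfl
lemma octW_7 (Y Z : EuclideanSpace ℝ (Fin 8)) : octW Y Z 7 =
  -(Y 0 * Z 7) - Y 1 * Z 3 - Y 2 * Z 6 + Y 3 * Z 1 - Y 4 * Z 5 + Y 5 * Z 4 + Y 6 * Z 2 - Y 7 * Z 0 := rfl

lemma P3_eq_inner (X Y Z : EuclideanSpace ℝ (Fin 8)) :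
    P3 X Y Z = inner ℝ X (octW Y Z) := by
  simp only [P3, PiLp.inner_apply, RCLike.inner_apply, conj_trivial, Fin.sum_univ_eight,
    octW_0, octW_1, octW_2, octW_3, octW_4, octW_5, octW_6, octW_7]
  try ring

lemma octW_norm (Y Z : EuclideanSpace ℝ (Fin 8)) : ‖octW Y Z‖ = ‖Y‖ * ‖Z‖ := by
  have h1 : ‖octW Y Z‖ ^ 2 = (‖Y‖ * ‖Z‖) ^ 2 := by
    rw [← real_inner_self_eq_norm_sq, mul_pow, ← real_inner_self_eq_norm_sq,
      ← real_inner_self_eq_norm_sq]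
    simp only [PiLp.inner_apply, RCLike.inner_apply, conj_trivial, Fin.sum_univ_eight,
      octW_0, octW_1, octW_2, octW_3, octW_4, octW_5, octW_6, octW_7]
    ring
  have h2 := congrArg Real.sqrt h1
  rwa [Real.sqrt_sq (norm_nonneg _), Real.sqrt_sq (by positivity)] at h2

lemma P3_cauchy (X Y Z : EuclideanSpace ℝ (Fin 8)) : |P3 X Y Z| ≤ ‖X‖ * ‖Y‖ * ‖Z‖ := by
  rw [P3_eq_inner]
  calc |(inner ℝ X (octW Y Z) : ℝ)| ≤ ‖X‖ * ‖octW Y Z‖ := abs_real_inner_le_norm _ _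
    _ = ‖X‖ * ‖Y‖ * ‖Z‖ := by rw [octW_norm, mul_assoc]

lemma amgm_aux (x y z : ℝ) (hx : 0 ≤ x) (hy : 0 ≤ y) (hz : 0 ≤ z)
    (h : x ^ 2 + y ^ 2 + z ^ 2 = 1) : x * y * z ≤ 1 / (3 * Real.sqrt 3) := by
  have hs : Real.sqrt 3 ^ 2 = 3 := Real.sq_sqrt (by norm_num)
  have hsp : (0:ℝ) < Real.sqrt 3 := Real.sqrt_pos.mpr (by norm_num)
  have h27 : x ^ 2 * y ^ 2 * z ^ 2 ≤ 1 / 27 := by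
    nlinarith [sq_nonneg (x ^ 2 - y ^ 2), sq_nonneg (y ^ 2 - z ^ 2), sq_nonneg (x ^ 2 - z ^ 2),
      sq_nonneg x, sq_nonneg y, sq_nonneg z, mul_nonneg (sq_nonneg x) (sq_nonneg y),
      mul_nonneg (sq_nonneg y) (sq_nonneg z), mul_nonneg (sq_nonneg x) (sq_nonneg z)]
  have hsq : (x * y * z) ^ 2 ≤ (1 / (3 * Real.sqrt 3)) ^ 2 := by
    have : (1 / (3 * Real.sqrt 3)) ^ 2 = 1 / 27 := by
      rw [div_pow, one_pow, mul_pow, hs]; norm_num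
    rw [this]; nlinarith [h27]
  calc x * y * z = Real.sqrt ((x * y * z) ^ 2) :=
        (Real.sqrt_sq (by positivity)).symm
    _ ≤ Real.sqrt ((1 / (3 * Real.sqrt 3)) ^ 2) := Real.sqrt_le_sqrt hsq
    _ = 1 / (3 * Real.sqrt 3) := Real.sqrt_sq (by positivity)

lemma sum24_split (f : Fin 24 → ℝ) :
    (∑ i, f i) = (∑ i : Fin 8, f ⟨i.1, by omega⟩)
      + (∑ i : Fin 8, f ⟨i.1 + 8, by omega⟩)
      + (∑ i : Fin 8, f ⟨i.1 + 16, by omega⟩) := by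
  have h := Fin.sum_univ_add (a := 8) (b := 16) (f := f)
  have h2 := Fin.sum_univ_add (a := 8) (b := 8)
      (f := fun i : Fin 16 => f (Fin.natAdd 8 i))
  rw [h2] at h
  rw [show (∑ i, f i) = ∑ i : Fin (8 + 16), f i from rfl, h, add_assoc]
  refine congrArg₂ _ ?_ (congrArg₂ _ ?_ ?_) <;>
    refine Finset.sum_congr rfl fun i _ => ?_ <;>
    first
      | rfl
      | (congr 1; ext; simp [Fin.natAdd, Fin.castAdd]; omega)

lemma norm_split (a : EuclideanSpace ℝ (Fin 24)) :
    ‖a‖ ^ 2 = ‖Xpart a‖ ^ 2 + ‖Ypart a‖ ^ 2 + ‖Zpart a‖ ^ 2 := by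
  rw [← real_inner_self_eq_norm_sq, ← real_inner_self_eq_norm_sq,
    ← real_inner_self_eq_norm_sq, ← real_inner_self_eq_norm_sq]
  simp only [PiLp.inner_apply, RCLike.inner_apply, conj_trivial]
  exact sum24_split (fun i => a i * a i)


open Real in
/-- `|P(X,Y,Z)| ≤ |X|·|Y|·|Z|` for all `X, Y, Z ∈ ℝ⁸`; moreover if
`|X|² + |Y|² + |Z|² = 1` then `|X|·|Y|·|Z| ≤ 1/(3√3)`, so `|P(a)| ≤ 1/(3√3)` on the
unit sphere `S²³ ⊂ ℝ²⁴`. -/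
theorem P_bounds :
    (∀ X Y Z : EuclideanSpace ℝ (Fin 8), |P3 X Y Z| ≤ ‖X‖ * ‖Y‖ * ‖Z‖) ∧
    (∀ X Y Z : EuclideanSpace ℝ (Fin 8), ‖X‖ ^ 2 + ‖Y‖ ^ 2 + ‖Z‖ ^ 2 = 1 →
      ‖X‖ * ‖Y‖ * ‖Z‖ ≤ 1 / (3 * sqrt 3)) ∧
    (∀ a : EuclideanSpace ℝ (Fin 24), ‖a‖ = 1 → |P24 a| ≤ 1 / (3 * sqrt 3)) := by
  refine ⟨P3_cauchy, fun X Y Z h => amgm_aux _ _ _ (norm_nonneg X) (norm_nonneg Y) (norm_nonneg Z) h, ?_⟩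
  intro a ha
  have h1 : ‖Xpart a‖ ^ 2 + ‖Ypart a‖ ^ 2 + ‖Zpart a‖ ^ 2 = 1 := by
    rw [← norm_split, ha]; norm_num
  calc |P24 a| ≤ ‖Xpart a‖ * ‖Ypart a‖ * ‖Zpart a‖ := P3_cauchy _ _ _
    _ ≤ 1 / (3 * sqrt 3) :=
      amgm_aux _ _ _ (norm_nonneg _) (norm_nonneg _) (norm_nonneg _) h1
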